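/- Let (p_n) and (q_n) be Nörlund sequences and let C_{pq} be the matrix method with entries c_{m,n} = k_{m-n} P_n / Q_m (n ≤ m), 0 otherwise, where (k_n) are the comparison coefficients. If C_{pq} is regular (maps every convergent sequence to a sequence converging to the same limit), then (N,q) includes (N,p): every sequence r with N^p r → σ satisfies N^q r → σ. -/

import Mathlib

theorem matrix_regular_implies_inclusion
    (p q k : ℕ → ℝ)
    (hp0 : 0 < p 0) (hp : ∀ n, 0 < n → 0 ≤ p n)
    (hq0 : 0 < q 0) (hq : ∀ n, 0 < n → 0 ≤ q n)
    (hk : ∀ n, q n = ∑ j ∈ Finset.range (n + 1), k j * p (n - j))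
    (P Q : ℕ → ℝ)
    (hP : ∀ n, P n = ∑ i ∈ Finset.range (n + 1), p i)
    (hQ : ∀ n, Q n = ∑ i ∈ Finset.range (n + 1), q i)
    (c : ℕ → ℕ → ℝ)
    (hc : ∀ m n, c m n = if n ≤ m then k (m - n) * P n / Q m else 0)
    (hreg : ∀ (s : ℕ → ℝ) (σ : ℝ), Filter.Tendsto s Filter.atTop (nhds σ) →
      Filter.Tendsto (fun m => ∑ n ∈ Finset.range (m + 1), c m n * s n)
        Filter.atTop (nhds σ)) :
    ∀ (r : ℕ → ℝ) (σ : ℝ),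
      Filter.Tendsto
        (fun m => (∑ j ∈ Finset.range (m + 1), p (m - j) * r j) / P m)
        Filter.atTop (nhds σ) →
      Filter.Tendsto
        (fun m => (∑ j ∈ Finset.range (m + 1), q (m - j) * r j) / Q m)
        Filter.atTop (nhds σ) := by
  intro r σ ht
  have hPpos : ∀ n, 0 < P n := by
    intro n
    rw [hP]
    apply Finset.sum_pos'
    · intro i hi
      rcases Nat.eq_zero_or_pos i with h0 | h0
      · subst h0; exact hp0.le
      · exact hp i h0
    · exact ⟨0, Finset.mem_range.mpr (Nat.succ_pos n), hp0⟩
  set t : ℕ → ℝ := fun n => (∑ j ∈ Finset.range (n + 1), p (n - j) * r j) / P n with ht_def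
  have key : ∀ m, (∑ n ∈ Finset.range (m + 1), c m n * t n)
      = (∑ j ∈ Finset.range (m + 1), q (m - j) * r j) / Q m := by
    intro m
    have step1 : ∀ n ∈ Finset.range (m + 1),
        c m n * t n = k (m - n) * (∑ j ∈ Finset.range (n + 1), p (n - j) * r j) / Q m := by
      intro n hn
      have hnm : n ≤ m := Nat.lt_succ_iff.mp (Finset.mem_range.mp hn)
      rw [hc, if_pos hnm, ht_def]
      have hPn := (hPpos n).ne'
      calc k (m - n) * P n / Q m * ((∑ j ∈ Finset.range (n + 1), p (n - j) * r j) / P n)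
          = k (m - n) * ((∑ j ∈ Finset.range (n + 1), p (n - j) * r j) / P n * P n) / Q m := by
            ring
        _ = k (m - n) * (∑ j ∈ Finset.range (n + 1), p (n - j) * r j) / Q m := by
            rw [div_mul_cancel₀ _ hPn]
    rw [Finset.sum_congr rfl step1, ← Finset.sum_div]
    congr 1
    -- double sum manipulation
    have expand : ∀ n, k (m - n) * (∑ j ∈ Finset.range (n + 1), p (n - j) * r j)
        = ∑ j ∈ Finset.range (n + 1), k (m - n) * p (n - j) * r j := by
      intro n; rw [Finset.mul_sum]; apply Finset.sum_congr rfl; intros; ring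
    simp only [expand]
    have swap := (Finset.sum_Ico_Ico_comm 0 (m + 1)
      (fun j n => k (m - n) * p (n - j) * r j)).symm
    simp only [Nat.Ico_zero_eq_range] at swap
    rw [swap]
    apply Finset.sum_congr rfl
    intro j hj
    have hjm : j ≤ m := Nat.lt_succ_iff.mp (Finset.mem_range.mp hj)
    rw [Finset.sum_Ico_eq_sum_range]
    have hmj : m + 1 - j = (m - j) + 1 := by omega
    rw [hmj, hk]
    rw [← Finset.sum_range_reflect (fun i => k i * p (m - j - i)) (m - j + 1)]
    rw [Finset.sum_mul]
    apply Finset.sum_congr rfl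
    intro i hi
    have him : i ≤ m - j := Nat.lt_succ_iff.mp (Finset.mem_range.mp hi)
    have e2 : j + i - j = i := by omega
    have e3 : m - j + 1 - 1 - i = m - j - i := by omega
    have e4 : m - j - (m - j - i) = i := by omega
    have e5 : m - (j + i) = m - j - i := by omega
    rw [e2, e3, e4, e5]
  have := hreg t σ ht
  have heq : (fun m => ∑ n ∈ Finset.range (m + 1), c m n * t n)
      = fun m => (∑ j ∈ Finset.range (m + 1), q (m - j) * r j) / Q m := funext key
  rwa [heq] at this
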